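/- The cover ideal J_3(C_6) = ∩_{i=1}^{6} ⟨x_i, x_{i+1}, x_{i+2}⟩ (indices mod 6) in K[x_1,…,x_6] satisfies J_3(C_6)^{(s)} = J_3(C_6)^s for all s ≥ 1, where J_3(C_6)^{(s)} = ∩_{i=1}^{6} ⟨x_i, x_{i+1}, x_{i+2}⟩^s. -/

import Mathlib

open MvPolynomial

namespace J3C6Aux

/-- window sum of an exponent vector -/
def W (i : ZMod 6) (a : ZMod 6 →₀ ℕ) : ℕ := a i + a (i + 1) + a (i + 2)

noncomputable def P (K : Type*) [Field K] (i : ZMod 6) : Ideal (MvPolynomial (ZMod 6) K) :=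
  Ideal.span {X i, X (i + 1), X (i + 2)}

variable {K : Type*} [Field K]

lemma W_add (i : ZMod 6) (a b : ZMod 6 →₀ ℕ) : W i (a + b) = W i a + W i b := by
  simp [W, Finsupp.add_apply]; ring

lemma mem_M_iff (i : ZMod 6) (t : ℕ) (p : MvPolynomial (ZMod 6) K) :
    p ∈ Ideal.span ((fun a => monomial a (1 : K)) '' {a | t ≤ W i a}) ↔
      ∀ m ∈ p.support, t ≤ W i m := by
  rw [mem_ideal_span_monomial_image]
  constructor
  · intro h m hm
    obtain ⟨a, ha, hle⟩ := h m hm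
    refine ha.trans ?_
    have hle' := Finsupp.le_def.mp hle
    exact add_le_add (add_le_add (hle' i) (hle' (i + 1))) (hle' (i + 2))
  · intro h m hm
    exact ⟨m, h m hm, le_rfl⟩

lemma X_mem_M (i j : ZMod 6) (hj : j = i ∨ j = i + 1 ∨ j = i + 2) :
    (X j : MvPolynomial (ZMod 6) K) ∈
      Ideal.span ((fun a => monomial a (1 : K)) '' {a | 1 ≤ W i a}) := by
  rw [mem_M_iff]
  intro m hm
  rw [MvPolynomial.support_X, Finset.mem_singleton] at hm
  subst hm
  rcases hj with h | h | h
  · have h1 : (Finsupp.single j 1 : ZMod 6 →₀ ℕ) i = 1 := by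
      rw [h]; exact Finsupp.single_eq_same
    unfold W; omega
  · have h1 : (Finsupp.single j 1 : ZMod 6 →₀ ℕ) (i + 1) = 1 := by
      rw [h]; exact Finsupp.single_eq_same
    unfold W; omega
  · have h1 : (Finsupp.single j 1 : ZMod 6 →₀ ℕ) (i + 2) = 1 := by
      rw [h]; exact Finsupp.single_eq_same
    unfold W; omega

lemma pow_le_M (i : ZMod 6) (t : ℕ) :
    P K i ^ t ≤ Ideal.span ((fun a => monomial a (1 : K)) '' {a | t ≤ W i a}) := by
  induction t with
  | zero =>
    intro p _
    rw [mem_M_iff]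
    intro m _
    exact Nat.zero_le _
  | succ t ih =>
    rw [pow_succ]
    refine Ideal.mul_le.mpr fun p hp q hq => ?_
    have hp' := (mem_M_iff (K := K) i t p).mp (ih hp)
    have hPle : P K i ≤ Ideal.span ((fun a => monomial a (1 : K)) '' {a | 1 ≤ W i a}) := by
      rw [P, Ideal.span_le]
      intro x hx
      rcases hx with h | h | h
      · exact h ▸ X_mem_M i i (Or.inl rfl)
      · exact h ▸ X_mem_M i (i + 1) (Or.inr (Or.inl rfl))
      · exact (Set.mem_singleton_iff.mp h) ▸ X_mem_M i (i + 2) (Or.inr (Or.inr rfl))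
    have hq' := (mem_M_iff (K := K) i 1 q).mp (hPle hq)
    rw [mem_M_iff]
    intro m hm
    classical
    have := MvPolynomial.support_mul p q hm
    rw [Finset.mem_add] at this
    obtain ⟨m1, hm1, m2, hm2, rfl⟩ := this
    rw [W_add]
    have := hp' m1 hm1
    have := hq' m2 hm2
    omega

lemma X_mem_P (j k : ZMod 6) (h : k = j ∨ k = j + 1 ∨ k = j + 2) :
    (X k : MvPolynomial (ZMod 6) K) ∈ P K j := by
  rcases h with h | h | h <;> subst h <;> exact Ideal.subset_span (by simp [P])

lemma winpair : ∀ i j : ZMod 6,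
    (i = j ∨ i = j + 1 ∨ i = j + 2) ∨ (i + 3 = j ∨ i + 3 = j + 1 ∨ i + 3 = j + 2) := by
  decide

lemma wintri : ∀ c j : ZMod 6,
    (c = j ∨ c = j + 1 ∨ c = j + 2) ∨ (c + 2 = j ∨ c + 2 = j + 1 ∨ c + 2 = j + 2) ∨
      (c + 4 = j ∨ c + 4 = j + 1 ∨ c + 4 = j + 2) := by
  decide

lemma pair_mem (i : ZMod 6) :
    (X i * X (i + 3) : MvPolynomial (ZMod 6) K) ∈ ⨅ j, P K j := by
  rw [Ideal.mem_iInf]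
  intro j
  rcases winpair i j with h | h
  · exact Ideal.mul_mem_right _ _ (X_mem_P j i h)
  · exact Ideal.mul_mem_left _ _ (X_mem_P j (i + 3) h)

lemma tri_mem (c : ZMod 6) :
    (X c * X (c + 2) * X (c + 4) : MvPolynomial (ZMod 6) K) ∈ ⨅ j, P K j := by
  rw [Ideal.mem_iInf]
  intro j
  rcases wintri c j with h | h | h
  · exact Ideal.mul_mem_right _ _ (Ideal.mul_mem_right _ _ (X_mem_P j c h))
  · exact Ideal.mul_mem_right _ _ (Ideal.mul_mem_left _ _ (X_mem_P j (c + 2) h))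
  · exact Ideal.mul_mem_left _ _ (X_mem_P j (c + 4) h)

lemma tridist : ∀ c : ZMod 6, c + 2 ≠ c ∧ c + 4 ≠ c ∧ c + 4 ≠ c + 2 := by decide

lemma pairdist : ∀ i : ZMod 6, i + 3 ≠ i := by decide

lemma tri (t : ℕ) (a : ZMod 6 →₀ ℕ) (c : ZMod 6)
    (h0 : t ≤ a c) (h2 : t ≤ a (c + 2)) (h4 : t ≤ a (c + 4)) :
    monomial a (1 : K) ∈ (⨅ i, P K i) ^ t := by
  classical
  set T : ZMod 6 →₀ ℕ :=
    Finsupp.single c 1 + Finsupp.single (c + 2) 1 + Finsupp.single (c + 4) 1 with hT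
  obtain ⟨d1, d2, d3⟩ := tridist c
  have hle : t • T ≤ a := by
    rw [Finsupp.le_def]
    intro j
    rw [Finsupp.smul_apply, hT]
    rw [Finsupp.add_apply, Finsupp.add_apply, Finsupp.single_apply, Finsupp.single_apply,
      Finsupp.single_apply]
    by_cases e1 : c = j
    · subst e1
      rw [if_pos rfl, if_neg d1, if_neg d2]
      simpa using h0
    · by_cases e2 : c + 2 = j
      · subst e2
        rw [if_neg e1, if_pos rfl, if_neg d3]
        simpa using h2
      · by_cases e3 : c + 4 = j
        · subst e3
          rw [if_neg e1, if_neg e2, if_pos rfl]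
          simpa using h4
        · rw [if_neg e1, if_neg e2, if_neg e3]
          simp
  have hsplit : a - t • T + t • T = a := tsub_add_cancel_of_le hle
  have hmono : monomial a (1 : K) = monomial (a - t • T) 1 * (monomial T 1) ^ t := by
    rw [monomial_pow, one_pow, monomial_mul, one_mul, hsplit]
  rw [hmono]
  apply Ideal.mul_mem_left
  apply Ideal.pow_mem_pow
  have : (monomial T (1 : K)) = X c * X (c + 2) * X (c + 4) := by
    rw [hT]
    rw [X, X, X, monomial_mul, monomial_mul, one_mul, one_mul]
  rw [this]
  exact tri_mem c

lemma Wpair : ∀ i j : ZMod 6,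
    W j (Finsupp.single i 1 + Finsupp.single (i + 3) 1) = 1 := by
  intro i j
  simp only [W, Finsupp.add_apply, Finsupp.single_apply]
  revert i j
  decide

lemma key (t : ℕ) : ∀ a : ZMod 6 →₀ ℕ, (∀ i, t ≤ W i a) →
    monomial a (1 : K) ∈ (⨅ i, P K i) ^ t := by
  induction t with
  | zero => intro a _; simp
  | succ t ih =>
    intro a hw
    by_cases hex : ∃ i, 0 < a i ∧ 0 < a (i + 3)
    · obtain ⟨i, hi1, hi2⟩ := hex
      set pr : ZMod 6 →₀ ℕ := Finsupp.single i 1 + Finsupp.single (i + 3) 1 with hpr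
      have hne := pairdist i
      have hle : pr ≤ a := by
        rw [Finsupp.le_def]
        intro j
        rw [hpr, Finsupp.add_apply, Finsupp.single_apply, Finsupp.single_apply]
        by_cases e1 : i = j
        · subst e1
          rw [if_pos rfl, if_neg hne]
          omega
        · by_cases e2 : i + 3 = j
          · subst e2
            rw [if_neg e1, if_pos rfl]
            omega
          · rw [if_neg e1, if_neg e2]
            simp
      have hle' := Finsupp.le_def.mp hle
      have hw' : ∀ j, t ≤ W j (a - pr) := by
        intro j
        have h1 := hw j
        have h2 := Wpair i j
        rw [← hpr] at h2
        unfold W at h1 h2 ⊢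
        rw [Finsupp.tsub_apply, Finsupp.tsub_apply, Finsupp.tsub_apply]
        have := hle' j
        have := hle' (j + 1)
        have := hle' (j + 2)
        omega
      have hsplit : a - pr + pr = a := tsub_add_cancel_of_le hle
      have hmono : monomial a (1 : K) = monomial (a - pr) 1 * monomial pr 1 := by
        rw [monomial_mul, one_mul, hsplit]
      have hprX : (monomial pr (1 : K)) = X i * X (i + 3) := by
        rw [hpr, X, X, monomial_mul, one_mul]
      rw [hmono, pow_succ]
      exact Ideal.mul_mem_mul (ih _ hw') (hprX ▸ pair_mem i)
    · push_neg at hex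
      have hp : ∀ i : ZMod 6, a i = 0 ∨ a (i + 3) = 0 := by
        intro i
        rcases Nat.eq_zero_or_pos (a i) with h | h
        · exact Or.inl h
        · exact Or.inr (Nat.le_antisymm (hex i h) (Nat.zero_le _))
      have h0 := hw 0; have h1 := hw 1; have h2 := hw 2
      have h3 := hw 3; have h4 := hw 4; have h5 := hw 5
      unfold W at h0 h1 h2 h3 h4 h5
      rw [show ((0 : ZMod 6) + 1) = 1 from by decide,
        show ((0 : ZMod 6) + 2) = 2 from by decide] at h0
      rw [show ((1 : ZMod 6) + 1) = 2 from by decide,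
        show ((1 : ZMod 6) + 2) = 3 from by decide] at h1
      rw [show ((2 : ZMod 6) + 1) = 3 from by decide,
        show ((2 : ZMod 6) + 2) = 4 from by decide] at h2
      rw [show ((3 : ZMod 6) + 1) = 4 from by decide,
        show ((3 : ZMod 6) + 2) = 5 from by decide] at h3
      rw [show ((4 : ZMod 6) + 1) = 5 from by decide,
        show ((4 : ZMod 6) + 2) = 0 from by decide] at h4
      rw [show ((5 : ZMod 6) + 1) = 0 from by decide,
        show ((5 : ZMod 6) + 2) = 1 from by decide] at h5
      have hp0 := hp 0; have hp1 := hp 1; have hp2 := hp 2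
      rw [show ((0 : ZMod 6) + 3) = 3 from by decide] at hp0
      rw [show ((1 : ZMod 6) + 3) = 4 from by decide] at hp1
      rw [show ((2 : ZMod 6) + 3) = 5 from by decide] at hp2
      have hcase : (t + 1 ≤ a 0 ∧ t + 1 ≤ a 2 ∧ t + 1 ≤ a 4) ∨
          (t + 1 ≤ a 1 ∧ t + 1 ≤ a 3 ∧ t + 1 ≤ a 5) := by omega
      rcases hcase with ⟨c0, c2, c4⟩ | ⟨c1, c3, c5⟩
      · refine tri (t + 1) a 0 c0 ?_ ?_
        · rw [show ((0 : ZMod 6) + 2) = 2 from by decide]; exact c2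
        · rw [show ((0 : ZMod 6) + 4) = 4 from by decide]; exact c4
      · refine tri (t + 1) a 1 c1 ?_ ?_
        · rw [show ((1 : ZMod 6) + 2) = 3 from by decide]; exact c3
        · rw [show ((1 : ZMod 6) + 4) = 5 from by decide]; exact c5

end J3C6Aux

open J3C6Aux in
/-- The cover ideal `J_3(C_6) = ∩_{i} ⟨x_i, x_{i+1}, x_{i+2}⟩` (indices mod 6) in
`K[x_1, …, x_6]` satisfies `J_3(C_6)^{(s)} = J_3(C_6)^s` for all `s ≥ 1`. -/
theorem J3C6_symbolic_eq_ordinary {K : Type*} [Field K] (s : ℕ) (hs : 1 ≤ s) :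
    (⨅ i : ZMod 6,
        (Ideal.span {X i, X (i + 1), X (i + 2)} : Ideal (MvPolynomial (ZMod 6) K)) ^ s) =
    (⨅ i : ZMod 6,
        (Ideal.span {X i, X (i + 1), X (i + 2)} : Ideal (MvPolynomial (ZMod 6) K))) ^ s := by
  have hP : ∀ i : ZMod 6,
      (Ideal.span {X i, X (i + 1), X (i + 2)} : Ideal (MvPolynomial (ZMod 6) K)) = P K i :=
    fun i => rfl
  simp only [hP]
  apply le_antisymm
  · intro p hp
    rw [Ideal.mem_iInf] at hp
    have hm : ∀ m ∈ p.support, ∀ i, s ≤ W i m := by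
      intro m hm i
      exact (mem_M_iff i s p).mp (pow_le_M i s (hp i)) m hm
    rw [p.as_sum]
    apply Ideal.sum_mem
    intro m hmem
    have : (monomial m (coeff m p) : MvPolynomial (ZMod 6) K) =
        C (coeff m p) * monomial m 1 := by
      rw [C_mul_monomial, mul_one]
    rw [this]
    exact Ideal.mul_mem_left _ _ (key s m (hm m hmem))
  · exact le_iInf fun i => Ideal.pow_right_mono (iInf_le _ i) s
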